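/- The function χ*(ρ, v) = M_λ · max(ρ^{2θ} − v², 0)^λ satisfies the classical entropy equation χ*_{ρρ} − θ² ρ^{2θ−2} χ*_{vv} = 0 in the interior of its support {v² < ρ^{2θ}, ρ > 0}, where λ = (3−γ)/(2(γ−1)), θ = (γ−1)/2, and 2λθ = 1 − θ. -/

import Mathlib

open Real Filter

/-- The classical entropy kernel `χ*(ρ,v) = M_λ (ρ^{2θ} − v²)₊^λ` solves the entropy
equation `χ_{ρρ} − θ²ρ^{2θ−2} χ_{vv} = 0` in the interior of its support. -/
theorem stmt6 (γ : ℝ) (hγ : γ ∈ Set.Ioo (1:ℝ) 3) (M : ℝ) (hM : 0 < M)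
    (θ lam : ℝ) (hθ : θ = (γ - 1) / 2) (hlam : lam = (3 - γ) / (2 * (γ - 1)))
    (χ : ℝ → ℝ → ℝ)
    (hχ : ∀ ρ v, χ ρ v = M * max (ρ ^ (2 * θ) - v ^ 2) 0 ^ lam)
    (ρ v : ℝ) (hρ : 0 < ρ) (hv : v ^ 2 < ρ ^ (2 * θ)) :
    deriv (fun r => deriv (fun r' => χ r' v) r) ρ
      - θ ^ 2 * ρ ^ (2 * θ - 2) * deriv (fun w => deriv (fun w' => χ ρ w') w) v = 0 := by
  have hγ1 : (1:ℝ) < γ := hγ.1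
  have hθ0 : 0 < θ := by rw [hθ]; linarith
  have key : 2 * lam * θ = 1 - θ := by
    have hne : γ - 1 ≠ 0 := by linarith
    rw [hθ, hlam]; field_simp; ring
  have hX : (0:ℝ) < ρ ^ (2 * θ) - v ^ 2 := sub_pos.mpr hv
  -- the open set in r
  have hcont : Continuous fun r : ℝ => r ^ (2 * θ) :=
    continuous_iff_continuousAt.mpr fun x =>
      Real.continuousAt_rpow_const x _ (Or.inr (by positivity))
  have hSopen : IsOpen {r : ℝ | 0 < r ∧ v ^ 2 < r ^ (2 * θ)} := by
    have h1 : IsOpen {r : ℝ | 0 < r} := isOpen_Ioi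
    have h2 : IsOpen {r : ℝ | v ^ 2 < r ^ (2 * θ)} :=
      isOpen_lt continuous_const hcont
    exact h1.inter h2
  have hρS : ρ ∈ {r : ℝ | 0 < r ∧ v ^ 2 < r ^ (2 * θ)} := ⟨hρ, hv⟩
  -- first derivative in r on the open set
  have hD1 : ∀ r ∈ {r : ℝ | 0 < r ∧ v ^ 2 < r ^ (2 * θ)},
      deriv (fun r' => χ r' v) r
        = M * (lam * (r ^ (2 * θ) - v ^ 2) ^ (lam - 1) * (2 * θ * r ^ (2 * θ - 1))) := by
    intro r hr
    have hXr : (0:ℝ) < r ^ (2 * θ) - v ^ 2 := sub_pos.mpr hr.2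
    have hinner : HasDerivAt (fun r' : ℝ => r' ^ (2 * θ) - v ^ 2)
        (2 * θ * r ^ (2 * θ - 1)) r :=
      (Real.hasDerivAt_rpow_const (Or.inl hr.1.ne')).sub_const _
    have houter : HasDerivAt (fun x : ℝ => x ^ lam)
        (lam * (r ^ (2 * θ) - v ^ 2) ^ (lam - 1)) (r ^ (2 * θ) - v ^ 2) :=
      Real.hasDerivAt_rpow_const (Or.inl hXr.ne')
    have hF : HasDerivAt (fun r' : ℝ => M * (r' ^ (2 * θ) - v ^ 2) ^ lam)
        (M * (lam * (r ^ (2 * θ) - v ^ 2) ^ (lam - 1) * (2 * θ * r ^ (2 * θ - 1)))) r :=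
      by have h1 := houter.comp r hinner; have h2 := h1.const_mul M; exact h2
    have hev : (fun r' => χ r' v) =ᶠ[nhds r] fun r' : ℝ => M * (r' ^ (2 * θ) - v ^ 2) ^ lam := by
      filter_upwards [hSopen.mem_nhds hr] with x hx
      rw [hχ, max_eq_left (sub_pos.mpr hx.2).le]
    exact (hF.congr_of_eventuallyEq hev).deriv
  -- second derivative in r
  have hg : HasDerivAt (fun r : ℝ => (r ^ (2 * θ) - v ^ 2) ^ (lam - 1))
      ((lam - 1) * (ρ ^ (2 * θ) - v ^ 2) ^ (lam - 1 - 1) * (2 * θ * ρ ^ (2 * θ - 1))) ρ := by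
    have hinner : HasDerivAt (fun r' : ℝ => r' ^ (2 * θ) - v ^ 2)
        (2 * θ * ρ ^ (2 * θ - 1)) ρ :=
      (Real.hasDerivAt_rpow_const (Or.inl hρ.ne')).sub_const _
    exact (Real.hasDerivAt_rpow_const (Or.inl hX.ne')).comp ρ hinner
  have hh : HasDerivAt (fun r : ℝ => r ^ (2 * θ - 1))
      ((2 * θ - 1) * ρ ^ (2 * θ - 1 - 1)) ρ :=
    Real.hasDerivAt_rpow_const (Or.inl hρ.ne')
  have hD2r : HasDerivAt
      (fun r => M * (lam * (r ^ (2 * θ) - v ^ 2) ^ (lam - 1) * (2 * θ * r ^ (2 * θ - 1))))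
      ((M * lam * (2 * θ)) *
        ((lam - 1) * (ρ ^ (2 * θ) - v ^ 2) ^ (lam - 1 - 1) * (2 * θ * ρ ^ (2 * θ - 1))
            * ρ ^ (2 * θ - 1)
          + (ρ ^ (2 * θ) - v ^ 2) ^ (lam - 1) * ((2 * θ - 1) * ρ ^ (2 * θ - 1 - 1)))) ρ := by
    have := (hg.mul hh).const_mul (M * lam * (2 * θ))
    exact this.congr_of_eventuallyEq (Filter.Eventually.of_forall fun r => by simp only [Pi.mul_apply]; ring)
  have h2r : deriv (fun r => deriv (fun r' => χ r' v) r) ρ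
      = (M * lam * (2 * θ)) *
        ((lam - 1) * (ρ ^ (2 * θ) - v ^ 2) ^ (lam - 1 - 1) * (2 * θ * ρ ^ (2 * θ - 1))
            * ρ ^ (2 * θ - 1)
          + (ρ ^ (2 * θ) - v ^ 2) ^ (lam - 1) * ((2 * θ - 1) * ρ ^ (2 * θ - 1 - 1))) := by
    have hev : (fun r => deriv (fun r' => χ r' v) r)
        =ᶠ[nhds ρ] fun r =>
          M * (lam * (r ^ (2 * θ) - v ^ 2) ^ (lam - 1) * (2 * θ * r ^ (2 * θ - 1))) := by
      filter_upwards [hSopen.mem_nhds hρS] with r hr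
      exact hD1 r hr
    rw [hev.deriv_eq, hD2r.deriv]
  -- the open set in w
  have hVopen : IsOpen {w : ℝ | w ^ 2 < ρ ^ (2 * θ)} :=
    isOpen_lt (by continuity) continuous_const
  have hvV : v ∈ {w : ℝ | w ^ 2 < ρ ^ (2 * θ)} := hv
  -- first derivative in w on the open set
  have hD1v : ∀ w ∈ {w : ℝ | w ^ 2 < ρ ^ (2 * θ)},
      deriv (fun w' => χ ρ w') w
        = M * (lam * (ρ ^ (2 * θ) - w ^ 2) ^ (lam - 1) * (-(2 * w))) := by
    intro w hw
    have hXw : (0:ℝ) < ρ ^ (2 * θ) - w ^ 2 := sub_pos.mpr hw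
    have hinner : HasDerivAt (fun w' : ℝ => ρ ^ (2 * θ) - w' ^ 2) (-(2 * w)) w := by
      simpa using (hasDerivAt_pow 2 w).const_sub (ρ ^ (2 * θ))
    have houter : HasDerivAt (fun x : ℝ => x ^ lam)
        (lam * (ρ ^ (2 * θ) - w ^ 2) ^ (lam - 1)) (ρ ^ (2 * θ) - w ^ 2) :=
      Real.hasDerivAt_rpow_const (Or.inl hXw.ne')
    have hF : HasDerivAt (fun w' : ℝ => M * (ρ ^ (2 * θ) - w' ^ 2) ^ lam)
        (M * (lam * (ρ ^ (2 * θ) - w ^ 2) ^ (lam - 1) * (-(2 * w)))) w :=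
      by have h1 := houter.comp w hinner; have h2 := h1.const_mul M; exact h2
    have hev : (fun w' => χ ρ w') =ᶠ[nhds w] fun w' : ℝ => M * (ρ ^ (2 * θ) - w' ^ 2) ^ lam := by
      filter_upwards [hVopen.mem_nhds hw] with x hx
      rw [hχ, max_eq_left (sub_pos.mpr hx).le]
    exact (hF.congr_of_eventuallyEq hev).deriv
  -- second derivative in w
  have hgv : HasDerivAt (fun w : ℝ => (ρ ^ (2 * θ) - w ^ 2) ^ (lam - 1))
      ((lam - 1) * (ρ ^ (2 * θ) - v ^ 2) ^ (lam - 1 - 1) * (-(2 * v))) v := by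
    have hinner : HasDerivAt (fun w' : ℝ => ρ ^ (2 * θ) - w' ^ 2) (-(2 * v)) v := by
      simpa using (hasDerivAt_pow 2 v).const_sub (ρ ^ (2 * θ))
    exact (Real.hasDerivAt_rpow_const (Or.inl hX.ne')).comp v hinner
  have hD2v : HasDerivAt
      (fun w => M * (lam * (ρ ^ (2 * θ) - w ^ 2) ^ (lam - 1) * (-(2 * w))))
      ((-(M * lam * 2)) *
        ((lam - 1) * (ρ ^ (2 * θ) - v ^ 2) ^ (lam - 1 - 1) * (-(2 * v)) * v
          + (ρ ^ (2 * θ) - v ^ 2) ^ (lam - 1) * 1)) v := by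
    have := (hgv.mul (hasDerivAt_id v)).const_mul (-(M * lam * 2))
    exact this.congr_of_eventuallyEq (Filter.Eventually.of_forall fun w => by simp only [Pi.mul_apply, id]; ring)
  have h2v : deriv (fun w => deriv (fun w' => χ ρ w') w) v
      = (-(M * lam * 2)) *
        ((lam - 1) * (ρ ^ (2 * θ) - v ^ 2) ^ (lam - 1 - 1) * (-(2 * v)) * v
          + (ρ ^ (2 * θ) - v ^ 2) ^ (lam - 1) * 1) := by
    have hev : (fun w => deriv (fun w' => χ ρ w') w)
        =ᶠ[nhds v] fun w =>
          M * (lam * (ρ ^ (2 * θ) - w ^ 2) ^ (lam - 1) * (-(2 * w))) := by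
      filter_upwards [hVopen.mem_nhds hvV] with w hw
      exact hD1v w hw
    rw [hev.deriv_eq, hD2v.deriv]
  -- final algebra
  rw [h2r, h2v, show (2 * θ - 2 : ℝ) = 2 * θ - 1 - 1 by ring]
  have f1 : (ρ ^ (2 * θ) - v ^ 2) ^ (lam - 1)
      = (ρ ^ (2 * θ) - v ^ 2) ^ (lam - 1 - 1) * (ρ ^ (2 * θ) - v ^ 2) := by
    nth_rewrite 1 [show (lam - 1 : ℝ) = (lam - 1 - 1) + 1 by ring]
    exact Real.rpow_add_one hX.ne' _
  have f2 : ρ ^ (2 * θ - 1) * ρ ^ (2 * θ - 1) = ρ ^ (2 * θ - 1 - 1) * ρ ^ (2 * θ) := by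
    rw [← Real.rpow_add hρ, ← Real.rpow_add hρ]; ring_nf
  rw [f1]
  linear_combination
    (4 * M * lam * θ ^ 2 * (lam - 1) * (ρ ^ (2 * θ) - v ^ 2) ^ (lam - 1 - 1)) * f2
      + (2 * M * lam * θ * (ρ ^ (2 * θ) - v ^ 2) ^ (lam - 1 - 1) * ρ ^ (2 * θ - 1 - 1)
          * (ρ ^ (2 * θ) - v ^ 2)) * key
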